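/- Let S be a semigroup, L an L-class of S, and H an H-class contained in L. Then the interval [Δ, H_L̄] of the congruence lattice Cong(ᔆL̄) of the principal factor act — where Δ is the diagonal on L ∪ {0} and H_L̄ = (H ∩ (L×L)) ∪ {(0,0)} — is isomorphic as a lattice to the subgroup lattice Sub(Γ(H)) of the Schützenberger group of H; moreover the isomorphism onto the lattice of left congruences of the Schützenberger group structure on H is given by restriction σ ↦ σ↾_H. -/

import Mathlib

open scoped Classical

/-- Green's preorder `≤_L`: `x ≤_L y` iff `x = y` or `x = a y` for some `a`. -/
def leL {S : Type*} [Mul S] (x y : S) : Prop := x = y ∨ ∃ a : S, x = a * y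

/-- Green's relation `L`. -/
def lrel {S : Type*} [Mul S] (x y : S) : Prop := leL x y ∧ leL y x

/-- Green's preorder `≤_R`: `x ≤_R y` iff `x = y` or `x = y a` for some `a`. -/
def leR {S : Type*} [Mul S] (x y : S) : Prop := x = y ∨ ∃ a : S, x = y * a

/-- Green's relation `R`. -/
def rrel {S : Type*} [Mul S] (x y : S) : Prop := leR x y ∧ leR y x

/-- Green's relation `H = L ∩ R`. -/
def hrel {S : Type*} [Mul S] (x y : S) : Prop := lrel x y ∧ rrel x y

/-- The lattice of congruences of an act, as a partially ordered type. -/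
abbrev ActCong (M A : Type*) (act : M → A → A) :=
  {σ : Setoid A // ∀ (m : M) ⦃a b : A⦄, σ.r a b → σ.r (act m a) (act m b)}

/-- The principal factor act on `L ∪ {0}` (with `0 = none`). -/
noncomputable def pfAct {M A : Type*} (act : M → A → A) (L : Set A) (m : M) :
    Option ↥L → Option ↥L
  | none => none
  | some x => if h : act m ↑x ∈ L then some ⟨act m ↑x, h⟩ else none

/-- The relation `H_L̄ = (H ∩ (L × L)) ∪ {(0,0)}` on `L ∪ {0}`. -/
def HbarRel {S : Type*} [Mul S] (L : Set S) (a b : Option ↥L) : Prop :=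
  (a = none ∧ b = none) ∨
    ∃ x y : ↥L, a = some x ∧ b = some y ∧ hrel (x : S) (y : S)

section Basics
variable {S : Type*} [Semigroup S]

theorem leL_refl (x : S) : leL x x := Or.inl rfl

theorem leL_trans {x y z : S} (h1 : leL x y) (h2 : leL y z) : leL x z := by
  rcases h1 with rfl | ⟨a, rfl⟩
  · exact h2
  · rcases h2 with rfl | ⟨b, rfl⟩
    · exact Or.inr ⟨a, rfl⟩
    · exact Or.inr ⟨a * b, (mul_assoc ..).symm⟩

theorem leR_trans {x y z : S} (h1 : leR x y) (h2 : leR y z) : leR x z := by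
  rcases h1 with rfl | ⟨a, rfl⟩
  · exact h2
  · rcases h2 with rfl | ⟨b, rfl⟩
    · exact Or.inr ⟨a, rfl⟩
    · exact Or.inr ⟨b * a, mul_assoc ..⟩

theorem leL_mul_right {x y : S} (t : S) (h : leL x y) : leL (x * t) (y * t) := by
  rcases h with rfl | ⟨a, rfl⟩
  · exact Or.inl rfl
  · exact Or.inr ⟨a, mul_assoc ..⟩

theorem lrel_refl (x : S) : lrel x x := ⟨leL_refl x, leL_refl x⟩
theorem lrel_symm {x y : S} (h : lrel x y) : lrel y x := ⟨h.2, h.1⟩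
theorem lrel_trans {x y z : S} (h1 : lrel x y) (h2 : lrel y z) : lrel x z :=
  ⟨leL_trans h1.1 h2.1, leL_trans h2.2 h1.2⟩
theorem lrel_mul_right {x y : S} (t : S) (h : lrel x y) : lrel (x * t) (y * t) :=
  ⟨leL_mul_right t h.1, leL_mul_right t h.2⟩

theorem rrel_refl (x : S) : rrel x x := ⟨Or.inl rfl, Or.inl rfl⟩
theorem rrel_symm {x y : S} (h : rrel x y) : rrel y x := ⟨h.2, h.1⟩
theorem rrel_trans {x y z : S} (h1 : rrel x y) (h2 : rrel y z) : rrel x z :=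
  ⟨leR_trans h1.1 h2.1, leR_trans h2.2 h1.2⟩

theorem hrel_refl (x : S) : hrel x x := ⟨lrel_refl x, rrel_refl x⟩
theorem hrel_symm {x y : S} (h : hrel x y) : hrel y x := ⟨lrel_symm h.1, rrel_symm h.2⟩
theorem hrel_trans {x y z : S} (h1 : hrel x y) (h2 : hrel y z) : hrel x z :=
  ⟨lrel_trans h1.1 h2.1, rrel_trans h1.2 h2.2⟩

end Basics

set_option linter.unusedSectionVars false

namespace SchutzAux

variable {S : Type*} [Semigroup S] (u v : S)

/-- The `L`-class of `u`. -/
abbrev Lset : Set S := {z | lrel u z}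
/-- The `H`-class of `v`. -/
abbrev Hset : Set S := {z | hrel v z}

variable {u v}

theorem mem_Hv : v ∈ Hset v := hrel_refl v

theorem pairwiseH {x y : S} (hx : x ∈ Hset v) (hy : y ∈ Hset v) : hrel x y :=
  hrel_trans (hrel_symm hx) hy

/-- decomposition of an element of `H` over `v` (using only the `L`-part). -/
theorem decompH {x : S} (hx : x ∈ Hset v) : x = v ∨ ∃ a : S, x = a * v := hx.1.2

section WithL
variable (hv : lrel u v)
include hv

theorem mem_Lv : v ∈ Lset u := hv

theorem pairwiseL {x y : S} (hx : x ∈ Lset u) (hy : y ∈ Lset u) : lrel x y :=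
  lrel_trans (lrel_symm hx) hy

/-- decomposition of an element of `L` over `v`. -/
theorem decompL {x : S} (hx : x ∈ Lset u) : x = v ∨ ∃ a : S, x = a * v :=
  (pairwiseL hv hv hx).2

end WithL

/-- Key Lemma A: if some element of the `H`-class has `h * t` again in the
`H`-class, then so does every element. -/
theorem memH_mul {h t : S} (hh : h ∈ Hset v) (hht : h * t ∈ Hset v)
    {h' : S} (hh' : h' ∈ Hset v) : h' * t ∈ Hset v := by
  rcases (pairwiseH hh' hh).1.1 with heq | ⟨b, hb⟩
  · rwa [heq]
  · have hL : lrel v (h' * t) :=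
      lrel_trans hht.1 (lrel_mul_right t (pairwiseH hh hh').1)
    rcases (pairwiseH hh hht).2.1 with heq2 | ⟨s, hs⟩
    · have he : h' * t = h' := by rw [hb, mul_assoc, ← heq2]
      rwa [he]
    · have he : (h' * t) * s = h' := by
        rw [hb, mul_assoc b h t, mul_assoc b (h*t) s, ← hs]
      exact ⟨hL, rrel_trans hh'.2 ⟨Or.inr ⟨s, he.symm⟩, Or.inr ⟨t, rfl⟩⟩⟩

/-- if two right translations agree at one point of `H` they agree on all of `H`. -/
theorem hmul_ext {x : S} (hx : x ∈ Hset v) {t t' : S} (e : x * t = x * t')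
    {h : S} (hh : h ∈ Hset v) : h * t = h * t' := by
  rcases (pairwiseH hh hx).1.1 with heq | ⟨a, ha⟩
  · rwa [heq]
  · rw [ha, mul_assoc, mul_assoc, e]

theorem hmul_id {x : S} (hx : x ∈ Hset v) {t : S} (e : x * t = x)
    {h : S} (hh : h ∈ Hset v) : h * t = h := by
  rcases (pairwiseH hh hx).1.1 with heq | ⟨a, ha⟩
  · rwa [heq]
  · rw [ha, mul_assoc, e]

section WithL
variable (hv : lrel u v) (hHL : ∀ z : S, hrel v z → lrel u z)
include hHL

theorem Hsub {x : S} (hx : x ∈ Hset v) : x ∈ Lset u := hHL x hx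

include hv

/-- right translation by `t` (with `v*t ∈ H`) maps the `L`-class into itself. -/
theorem memL_mul {t : S} (hvt : v * t ∈ Hset v) {z : S} (hz : z ∈ Lset u) :
    z * t ∈ Lset u := by
  have h1 : lrel (v * t) (z * t) := lrel_mul_right t (pairwiseL hv hv hz)
  exact lrel_trans (hHL _ hvt) h1

/-- cancellation on the whole `L`-class, second form. -/
theorem cancel2 {t t' : S} (hvt : v * t ∈ Hset v) (hc : v * t * t' = v)
    {z : S} (hz : z ∈ Lset u) : z * t' * t = z := by
  rcases (pairwiseL hv (hHL _ hvt) hz).2 with heq | ⟨b, hb⟩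
  · rw [heq, hc]
  · rw [hb, mul_assoc b (v*t) t', hc, mul_assoc]

omit hHL

/-- cancellation on the whole `L`-class, first form. -/
theorem cancel1 {t t' : S} (hc : v * t * t' = v) {z : S} (hz : z ∈ Lset u) :
    z * t * t' = z := by
  rcases decompL hv hz with rfl | ⟨a, rfl⟩
  · exact hc
  · rw [mul_assoc a v t, mul_assoc a (v*t) t', hc]

end WithL

variable (v) in
/-- The carrier of the Schützenberger group. -/
def GammaSet : Set (Equiv.Perm ↥(Hset v)) :=
  {π | π = Equiv.refl ↥(Hset v) ∨ ∃ t : S, ∀ h : ↥(Hset v), (↑(π h) : S) = (h : S) * t}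

section Gamma
variable (hv : lrel u v) (hHL : ∀ z : S, hrel v z → lrel u z)
include hv hHL

/-- If `v * t ∈ H` then right translation by `t` is a permutation of `H`. -/
theorem exists_perm {t : S} (hvt : v * t ∈ Hset v) :
    ∃ π : Equiv.Perm ↥(Hset v), π ∈ GammaSet v ∧
      ∀ h : ↥(Hset v), (↑(π h) : S) = (h : S) * t := by
  by_cases he : v * t = v
  · refine ⟨Equiv.refl _, Or.inl rfl, fun h => ?_⟩
    exact (hmul_id mem_Hv he h.2).symm
  · rcases (pairwiseH mem_Hv hvt).2.1 with heq | ⟨t', ht'⟩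
    · exact absurd heq.symm he
    · have hc : v * t * t' = v := ht'.symm
      have hvt' : v * t' ∈ Hset v := by
        have : (v * t) * t' ∈ Hset v := by rw [hc]; exact mem_Hv
        exact memH_mul hvt this mem_Hv
      refine ⟨⟨fun h => ⟨(h : S) * t, memH_mul mem_Hv hvt h.2⟩,
              fun h => ⟨(h : S) * t', memH_mul mem_Hv hvt' h.2⟩, ?_, ?_⟩,
        Or.inr ⟨t, fun _ => rfl⟩, fun _ => rfl⟩
      · intro h
        exact Subtype.ext (cancel1 hv hc (Hsub hHL h.2))
      · intro h
        exact Subtype.ext (cancel2 hv hHL hvt hc (Hsub hHL h.2))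

/-- transitivity of the Schützenberger group action on `H`. -/
theorem gamma_trans (x y : ↥(Hset v)) :
    ∃ π : Equiv.Perm ↥(Hset v), π ∈ GammaSet v ∧ π x = y := by
  rcases (pairwiseH x.2 y.2).2.2 with heq | ⟨t, ht⟩
  · exact ⟨Equiv.refl _, Or.inl rfl, Subtype.ext heq.symm⟩
  · have hvt : v * t ∈ Hset v := by
      refine memH_mul x.2 ?_ mem_Hv
      rw [← ht]; exact y.2
    obtain ⟨π, hm, hr⟩ := exists_perm hv hHL hvt
    exact ⟨π, hm, Subtype.ext ((hr x).trans ht.symm)⟩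

end Gamma

/-- freeness of the Schützenberger group action. -/
theorem gamma_free {π π' : Equiv.Perm ↥(Hset v)} (h1 : π ∈ GammaSet v)
    (h2 : π' ∈ GammaSet v) (x : ↥(Hset v)) (hx : π x = π' x) : π = π' := by
  have key : ∀ (ρ : Equiv.Perm ↥(Hset v)) (t : S),
      (∀ h : ↥(Hset v), (↑(ρ h) : S) = (h : S) * t) → (x : S) * t = (x : S) →
      ρ = Equiv.refl ↥(Hset v) := by
    intro ρ t ht e
    refine Equiv.ext fun h => Subtype.ext ?_
    exact (ht h).trans (hmul_id x.2 e h.2)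
  rcases h1 with rfl | ⟨t, ht⟩ <;> rcases h2 with rfl | ⟨t', ht'⟩
  · rfl
  · have e : (x : S) * t' = (x : S) := by
      rw [← ht' x, ← hx]; rfl
    exact (key π' t' ht' e).symm
  · have e : (x : S) * t = (x : S) := by
      rw [← ht x, hx]; rfl
    exact key π t ht e
  · have e : (x : S) * t = (x : S) * t' := by rw [← ht x, ← ht' x, hx]
    refine Equiv.ext fun h => Subtype.ext ?_
    rw [ht h, ht' h, hmul_ext x.2 e h.2]

section Gamma2
variable (hv : lrel u v) (hHL : ∀ z : S, hrel v z → lrel u z)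
include hv hHL

/-- inverses: if `π` is right translation by `t` on `H`, then `π⁻¹` is right
translation by some `t'` with `v * t * t' = v`. -/
theorem gamma_invT {π : Equiv.Perm ↥(Hset v)} {t : S}
    (ht : ∀ h : ↥(Hset v), (↑(π h) : S) = (h : S) * t) :
    ∃ t' : S, (∀ h : ↥(Hset v), (↑(π⁻¹ h) : S) = (h : S) * t') ∧ v * t * t' = v := by
  have hvt : v * t ∈ Hset v := by
    have h0 := (π ⟨v, mem_Hv⟩).2
    rwa [ht ⟨v, mem_Hv⟩] at h0
  by_cases he : v * t = v
  · have hπ : π = Equiv.refl _ := by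
      refine Equiv.ext fun h => Subtype.ext ?_
      exact (ht h).trans (hmul_id mem_Hv he h.2)
    refine ⟨t, fun h => ?_, by rw [he, he]⟩
    rw [hπ]
    exact (hmul_id mem_Hv he h.2).symm
  · rcases (pairwiseH mem_Hv hvt).2.1 with heq | ⟨t', ht'⟩
    · exact absurd heq.symm he
    · have hc : v * t * t' = v := ht'.symm
      have hvt' : v * t' ∈ Hset v := by
        have h2 : (v * t) * t' ∈ Hset v := by rw [hc]; exact mem_Hv
        exact memH_mul hvt h2 mem_Hv
      refine ⟨t', fun h => ?_, hc⟩
      have hmem : (h : S) * t' ∈ Hset v := memH_mul mem_Hv hvt' h.2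
      have happ : π ⟨(h : S) * t', hmem⟩ = h := by
        refine Subtype.ext ?_
        rw [ht]
        exact cancel2 hv hHL hvt hc (Hsub hHL h.2)
      have hfin : π⁻¹ h = ⟨(h : S) * t', hmem⟩ :=
        Equiv.Perm.inv_eq_iff_eq.mpr happ.symm
      rw [hfin]

variable (v) in
/-- The Schützenberger group as a subgroup of `Perm H`. -/
def GammaGrp : Subgroup (Equiv.Perm ↥(Hset v)) where
  carrier := GammaSet v
  one_mem' := Or.inl rfl
  mul_mem' := by
    rintro a b (rfl | ⟨t, ht⟩) hb
    · rwa [← Equiv.Perm.one_def, one_mul]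
    · rcases hb with rfl | ⟨s, hs⟩
      · rw [← Equiv.Perm.one_def, mul_one]
        exact Or.inr ⟨t, ht⟩
      · refine Or.inr ⟨s * t, fun h => ?_⟩
        rw [Equiv.Perm.mul_apply, ht, hs, mul_assoc]
  inv_mem' := by
    rintro a (rfl | ⟨t, ht⟩)
    · left
      rw [← Equiv.Perm.one_def, inv_one, Equiv.Perm.one_def]
    · obtain ⟨t', ht', -⟩ := gamma_invT hv hHL ht
      exact Or.inr ⟨t', ht'⟩

theorem mem_GammaGrp {π : Equiv.Perm ↥(Hset v)} :
    π ∈ GammaGrp v hv hHL ↔ π ∈ GammaSet v := Iff.rfl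

end Gamma2

section Act

variable (hHL : ∀ z : S, hrel v z → lrel u z)

theorem pfAct_some (m : S) (x : ↥(Lset u)) :
    pfAct (fun s y => s * y) (Lset u) m (some x) =
      if h : m * (x : S) ∈ Lset u then some ⟨m * (x : S), h⟩ else none := rfl

theorem pfAct_neg {m : S} {x : ↥(Lset u)} (h : ¬ m * (x : S) ∈ Lset u) :
    pfAct (fun s y => s * y) (Lset u) m (some x) = none := by
  rw [pfAct_some, dif_neg h]

theorem pfAct_eq_some {m : S} {x w : ↥(Lset u)} (h : m * (x : S) = (w : S)) :
    pfAct (fun s y => s * y) (Lset u) m (some x) = some w := by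
  have hm : m * (x : S) ∈ Lset u := by rw [h]; exact w.2
  rw [pfAct_some, dif_pos hm]
  exact congrArg some (Subtype.ext h)

/-- the inclusion of `H` into `L ∪ {0}`. -/
abbrev iota (x : ↥(Hset v)) : Option ↥(Lset u) := some ⟨(x : S), hHL _ x.2⟩

/-- `v` as an element of `H`. -/
abbrev vH : ↥(Hset v) := ⟨v, mem_Hv⟩

/-- global version of membership in the restriction subgroup: if `σ` relates
`v` and `π v`, it relates `x` and `π x` for every `x ∈ H`. -/
theorem glob (σ : ActCong S (Option ↥(Lset u)) (pfAct (fun s y => s * y) (Lset u)))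
    {π : Equiv.Perm ↥(Hset v)} (hπ : π ∈ GammaSet v)
    (hs : σ.1.r (iota hHL vH) (iota hHL (π vH)))
    (x : ↥(Hset v)) : σ.1.r (iota hHL x) (iota hHL (π x)) := by
  rcases hπ with rfl | ⟨t, ht⟩
  · exact σ.1.iseqv.refl _
  · rcases decompH x.2 with hx | ⟨a, hx⟩
    · have hxv : x = vH := Subtype.ext hx
      rw [hxv]; exact hs
    · have hπv : (↑(π vH) : S) = v * t := ht _
      have e1 : pfAct (fun s y => s * y) (Lset u) a (iota hHL vH) = iota hHL x :=
        pfAct_eq_some hx.symm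
      have e2 : pfAct (fun s y => s * y) (Lset u) a (iota hHL (π vH)) =
          iota hHL (π x) :=
        pfAct_eq_some (by rw [hπv, ← mul_assoc, ← hx, ← ht x])
      have h3 := σ.2 a hs
      rw [e1, e2] at h3
      exact h3

variable (hv : lrel u v)

/-- restriction of a congruence to `H`, as a subgroup of the Schützenberger group. -/
def eSub (σ : ActCong S (Option ↥(Lset u)) (pfAct (fun s y => s * y) (Lset u))) :
    Subgroup ↥(GammaGrp v hv hHL) where
  carrier := {π | σ.1.r (iota hHL vH) (iota hHL ((π : Equiv.Perm ↥(Hset v)) vH))}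
  one_mem' := σ.1.iseqv.refl _
  mul_mem' := by
    rintro a b ha hb
    refine σ.1.iseqv.trans hb ?_
    exact glob hHL σ a.2 ha ((b : Equiv.Perm ↥(Hset v)) vH)
  inv_mem' := by
    rintro a ha
    have h1 := glob hHL σ a.2 ha ((a : Equiv.Perm ↥(Hset v))⁻¹ vH)
    rw [show (a : Equiv.Perm ↥(Hset v)) ((a : Equiv.Perm ↥(Hset v))⁻¹ vH) = vH from
      Equiv.apply_symm_apply _ _] at h1
    exact σ.1.iseqv.symm h1

/-- the "moreover" clause: `σ` relates two elements of `H` iff some permutation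
in the associated subgroup carries one to the other. -/
theorem moreover (σ : ActCong S (Option ↥(Lset u)) (pfAct (fun s y => s * y) (Lset u)))
    (x y : ↥(Hset v)) :
    σ.1.r (iota hHL x) (iota hHL y) ↔
      ∃ π : ↥(GammaGrp v hv hHL), π ∈ eSub hHL hv σ ∧
        (π : Equiv.Perm ↥(Hset v)) x = y := by
  constructor
  · intro hr
    obtain ⟨π, hπ, hπx⟩ := gamma_trans hv hHL x y
    refine ⟨⟨π, hπ⟩, ?_, hπx⟩
    rcases hπ with rfl | ⟨t, ht⟩
    · exact σ.1.iseqv.refl _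
    · show σ.1.r (iota hHL vH) (iota hHL (π vH))
      rcases (x.2.1.1 : leL v (x : S)) with hx | ⟨c, hx⟩
      · have hxv : x = vH := Subtype.ext hx.symm
        have hyπ : y = π vH := by rw [← hπx, hxv]
        rw [← hyπ, ← hxv]; exact hr
      · have e1 : pfAct (fun s y => s * y) (Lset u) c (iota hHL x) = iota hHL vH :=
          pfAct_eq_some hx.symm
        have e2 : pfAct (fun s y => s * y) (Lset u) c (iota hHL y) =
            iota hHL (π vH) := by
          refine pfAct_eq_some ?_
          rw [← hπx, ht x, ht vH]
          show c * ((x : S) * t) = v * t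
          rw [← mul_assoc, ← hx]
        have h3 := σ.2 c hr
        rw [e1, e2] at h3
        exact h3
  · rintro ⟨π, hπ, hπx⟩
    have h1 := glob hHL σ π.2 hπ x
    rw [hπx] at h1
    exact h1

theorem rule_vt {π : Equiv.Perm ↥(Hset v)} {t : S}
    (ht : ∀ h : ↥(Hset v), (↑(π h) : S) = (h : S) * t) : v * t ∈ Hset v := by
  have h0 := (π vH).2
  rwa [ht vH] at h0

section SK
variable (hHL : ∀ z : S, hrel v z → lrel u z) (hv : lrel u v)

/-- the congruence associated to a subgroup of the Schützenberger group. -/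
def sRel (K : Subgroup ↥(GammaGrp v hv hHL)) (a b : Option ↥(Lset u)) : Prop :=
  a = b ∨ ∃ (x y : ↥(Lset u)) (t : S), a = some x ∧ b = some y ∧
    (y : S) = (x : S) * t ∧ ∃ π : ↥(GammaGrp v hv hHL), π ∈ K ∧
      ∀ h : ↥(Hset v), (↑((π : Equiv.Perm ↥(Hset v)) h) : S) = (h : S) * t

variable {hHL hv}

theorem sRel_mono {K K' : Subgroup ↥(GammaGrp v hv hHL)} (h : K ≤ K')
    {a b : Option ↥(Lset u)} (hr : sRel hHL hv K a b) : sRel hHL hv K' a b := by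
  rcases hr with rfl | ⟨x, y, t, rfl, rfl, hyt, π, hπ, ht⟩
  · exact Or.inl rfl
  · exact Or.inr ⟨x, y, t, rfl, rfl, hyt, π, h hπ, ht⟩

theorem sRel_symm {K : Subgroup ↥(GammaGrp v hv hHL)}
    {a b : Option ↥(Lset u)} (hr : sRel hHL hv K a b) : sRel hHL hv K b a := by
  rcases hr with rfl | ⟨x, y, t, rfl, rfl, hyt, π, hπ, ht⟩
  · exact Or.inl rfl
  · obtain ⟨t', ht', hc⟩ := gamma_invT hv hHL ht
    refine Or.inr ⟨y, x, t', rfl, rfl, ?_, π⁻¹, inv_mem hπ, fun h => ht' h⟩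
    rw [hyt]
    exact (cancel1 hv hc x.2).symm

theorem sRel_trans {K : Subgroup ↥(GammaGrp v hv hHL)}
    {a b c : Option ↥(Lset u)} (h1 : sRel hHL hv K a b) (h2 : sRel hHL hv K b c) :
    sRel hHL hv K a c := by
  rcases h1 with rfl | ⟨x, y, t, rfl, hb, hyt, π, hπ, ht⟩
  · exact h2
  · rcases h2 with rfl | ⟨y', z, s, hb', rfl, hzs, π', hπ', hs⟩
    · exact Or.inr ⟨x, y, t, rfl, hb, hyt, π, hπ, ht⟩
    · rw [hb] at hb'
      have hyy : y = y' := Option.some.inj hb'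
      refine Or.inr ⟨x, z, t * s, rfl, rfl, ?_, π' * π, mul_mem hπ' hπ, fun h => ?_⟩
      · rw [hzs, ← hyy, hyt, mul_assoc]
      · show (↑((π' : Equiv.Perm ↥(Hset v)) ((π : Equiv.Perm ↥(Hset v)) h)) : S)
          = (h : S) * (t * s)
        rw [hs, ht, mul_assoc]

theorem sRel_compat {K : Subgroup ↥(GammaGrp v hv hHL)} (m : S)
    {a b : Option ↥(Lset u)} (hr : sRel hHL hv K a b) :
    sRel hHL hv K (pfAct (fun s y => s * y) (Lset u) m a)
      (pfAct (fun s y => s * y) (Lset u) m b) := by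
  rcases hr with rfl | ⟨x, y, t, rfl, rfl, hyt, π, hπ, ht⟩
  · exact Or.inl rfl
  · have hvt : v * t ∈ Hset v := rule_vt ht
    obtain ⟨t', ht', hc⟩ := gamma_invT hv hHL ht
    have hvt' : v * t' ∈ Hset v := rule_vt ht'
    by_cases hm : m * (x : S) ∈ Lset u
    · have hmy : m * (y : S) ∈ Lset u := by
        rw [hyt, ← mul_assoc]
        exact memL_mul hv hHL hvt hm
      rw [pfAct_eq_some (w := ⟨m * (x : S), hm⟩) rfl,
        pfAct_eq_some (w := ⟨m * (y : S), hmy⟩) rfl]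
      refine Or.inr ⟨⟨m * (x : S), hm⟩, ⟨m * (y : S), hmy⟩, t, rfl, rfl, ?_, π, hπ, ht⟩
      show m * (y : S) = (m * (x : S)) * t
      rw [hyt, mul_assoc]
    · have hmy : ¬ m * (y : S) ∈ Lset u := by
        intro hL
        apply hm
        have he : m * (x : S) = (m * (y : S)) * t' := by
          conv_lhs => rw [← cancel1 hv hc x.2]
          rw [← mul_assoc m ((x : S) * t) t', ← hyt]
        rw [he]
        exact memL_mul hv hHL hvt' hL
      rw [pfAct_neg hm, pfAct_neg hmy]
      exact Or.inl rfl

theorem sRel_bound {K : Subgroup ↥(GammaGrp v hv hHL)}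
    {a b : Option ↥(Lset u)} (hr : sRel hHL hv K a b) : HbarRel (Lset u) a b := by
  rcases hr with rfl | ⟨x, y, t, rfl, rfl, hyt, π, hπ, ht⟩
  · cases a with
    | none => exact Or.inl ⟨rfl, rfl⟩
    | some x => exact Or.inr ⟨x, x, rfl, rfl, hrel_refl _⟩
  · obtain ⟨t', ht', hc⟩ := gamma_invT hv hHL ht
    refine Or.inr ⟨x, y, rfl, rfl,
      ⟨pairwiseL hv x.2 y.2, Or.inr ⟨t', ?_⟩, Or.inr ⟨t, hyt⟩⟩⟩
    rw [hyt]
    exact (cancel1 hv hc x.2).symm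

variable (hHL hv)

/-- the congruence associated to a subgroup, as an element of the interval. -/
def sCong (K : Subgroup ↥(GammaGrp v hv hHL)) :
    ↥{σ : ActCong S (Option ↥(Lset u)) (pfAct (fun s y => s * y) (Lset u)) |
        ∀ a b, σ.1.r a b → HbarRel (Lset u) a b} :=
  ⟨⟨⟨sRel hHL hv K, ⟨fun _ => Or.inl rfl, fun h => sRel_symm h,
      fun h1 h2 => sRel_trans h1 h2⟩⟩,
    fun m _ _ h => sRel_compat m h⟩,
    fun _ _ h => sRel_bound h⟩

theorem eSub_sCong (K : Subgroup ↥(GammaGrp v hv hHL)) :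
    eSub hHL hv (sCong hHL hv K).1 = K := by
  ext π
  constructor
  · intro hπ
    rcases (hπ : sRel hHL hv K (iota hHL vH)
        (iota hHL ((π : Equiv.Perm ↥(Hset v)) vH))) with heq |
        ⟨x, y, t, hx, hy, hyt, π', hπ', ht⟩
    · have hval : ((π : Equiv.Perm ↥(Hset v)) vH : S) = v :=
        (congrArg Subtype.val (Option.some.inj heq)).symm
      have h1 : (π : Equiv.Perm ↥(Hset v)) vH = (Equiv.refl ↥(Hset v)) vH :=
        Subtype.ext hval
      have h2 : (π : Equiv.Perm ↥(Hset v)) = Equiv.refl ↥(Hset v) :=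
        gamma_free π.2 (Or.inl rfl) vH h1
      have h3 : π = 1 := Subtype.ext (h2.trans (Equiv.Perm.one_def).symm)
      rw [h3]
      exact one_mem K
    · have hxv : (x : S) = v := (congrArg Subtype.val (Option.some.inj hx)).symm
      have hyv : (y : S) = ((π : Equiv.Perm ↥(Hset v)) vH : S) :=
        (congrArg Subtype.val (Option.some.inj hy)).symm
      have h1 : (π : Equiv.Perm ↥(Hset v)) vH =
          ((π' : ↥(GammaGrp v hv hHL)) : Equiv.Perm ↥(Hset v)) vH := by
        refine Subtype.ext ?_
        rw [← hyv, hyt, hxv, ht vH]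
      have h2 : π = π' := Subtype.ext (gamma_free π.2 π'.2 vH h1)
      rw [h2]
      exact hπ'
  · intro hπ
    show sRel hHL hv K (iota hHL vH) (iota hHL ((π : Equiv.Perm ↥(Hset v)) vH))
    rcases π.2 with hrefl | ⟨t, ht⟩
    · left
      rw [hrefl]
      rfl
    · exact Or.inr ⟨⟨v, hHL _ mem_Hv⟩,
        ⟨((π : Equiv.Perm ↥(Hset v)) vH : S), hHL _ ((π : Equiv.Perm ↥(Hset v)) vH).2⟩,
        t, rfl, rfl, ht vH, π, hπ, ht⟩

theorem sRel_eSub_iff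
    (σ : ↥{σ : ActCong S (Option ↥(Lset u)) (pfAct (fun s y => s * y) (Lset u)) |
        ∀ a b, σ.1.r a b → HbarRel (Lset u) a b}) (a b : Option ↥(Lset u)) :
    sRel hHL hv (eSub hHL hv σ.1) a b ↔ σ.1.1.r a b := by
  constructor
  · rintro (rfl | ⟨x, y, t, rfl, rfl, hyt, π, hπ, ht⟩)
    · exact σ.1.1.iseqv.refl _
    · have hπ' : σ.1.1.r (iota hHL vH)
          (iota hHL ((π : Equiv.Perm ↥(Hset v)) vH)) := hπ
      rcases decompL hv x.2 with hx | ⟨c, hx⟩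
      · have e1 : iota hHL vH = some x := congrArg some (Subtype.ext hx.symm)
        have e2 : iota hHL ((π : Equiv.Perm ↥(Hset v)) vH) = some y := by
          refine congrArg some (Subtype.ext ?_)
          rw [ht vH, hyt, hx]
        rw [e1, e2] at hπ'
        exact hπ'
      · have h3 := σ.1.2 c hπ'
        have e1 : pfAct (fun s y => s * y) (Lset u) c (iota hHL vH) = some x :=
          pfAct_eq_some hx.symm
        have e2 : pfAct (fun s y => s * y) (Lset u) c
            (iota hHL ((π : Equiv.Perm ↥(Hset v)) vH)) = some y := by
          refine pfAct_eq_some ?_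
          rw [ht vH]
          show c * (v * t) = (y : S)
          rw [← mul_assoc, ← hx, ← hyt]
        rw [e1, e2] at h3
        exact h3
  · intro hab
    rcases σ.2 a b hab with ⟨rfl, rfl⟩ | ⟨x, y, ha, hb, hxy⟩
    · exact Or.inl rfl
    · subst ha
      subst hb
      rcases hxy.2.2 with heq | ⟨t, hyt⟩
      · exact Or.inl (congrArg some (Subtype.ext heq.symm))
      · rcases (pairwiseL hv (mem_Lv hv) x.2).1 with hvx | ⟨c, hvx⟩
        · have hyH : (y : S) ∈ Hset v := by
            have h0 : hrel (x : S) (y : S) := hxy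
            rw [← hvx] at h0
            exact h0
          have hvt : v * t ∈ Hset v := by
            have he : v * t = (y : S) := by rw [hvx, ← hyt]
            rw [he]
            exact hyH
          obtain ⟨π, hπΓ, ht⟩ := exists_perm hv hHL hvt
          refine Or.inr ⟨x, y, t, rfl, rfl, hyt, ⟨π, hπΓ⟩, ?_, ht⟩
          show σ.1.1.r (iota hHL vH) (iota hHL (π vH))
          have e1 : iota hHL vH = some x := congrArg some (Subtype.ext hvx)
          have e2 : iota hHL (π vH) = some y := by
            refine congrArg some (Subtype.ext ?_)
            rw [ht vH]
            show v * t = (y : S)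
            rw [hvx, ← hyt]
          rw [e1, e2]
          exact hab
        · have h3 := σ.1.2 c hab
          have e1 : pfAct (fun s y => s * y) (Lset u) c (some x) = iota hHL vH :=
            pfAct_eq_some hvx.symm
          by_cases hcy : c * (y : S) ∈ Lset u
          · rw [e1, pfAct_eq_some (w := ⟨c * (y : S), hcy⟩) rfl] at h3
            have hcyH : c * (y : S) ∈ Hset v := by
              rcases σ.2 _ _ h3 with ⟨h4, _⟩ | ⟨x', y', h4, h5, h6⟩
              · exact absurd h4 (by simp)
              · have hx' : (x' : S) = v := (congrArg Subtype.val (Option.some.inj h4)).symm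
                have hy' : (y' : S) = c * (y : S) :=
                  (congrArg Subtype.val (Option.some.inj h5)).symm
                rw [← hy', ← hx']
                exact h6
            have hvt : v * t ∈ Hset v := by
              have he : v * t = c * (y : S) := by rw [hvx, mul_assoc, ← hyt]
              rw [he]
              exact hcyH
            obtain ⟨π, hπΓ, ht⟩ := exists_perm hv hHL hvt
            refine Or.inr ⟨x, y, t, rfl, rfl, hyt, ⟨π, hπΓ⟩, ?_, ht⟩
            show σ.1.1.r (iota hHL vH) (iota hHL (π vH))
            have e2 : (some ⟨c * (y : S), hcy⟩ : Option ↥(Lset u)) = iota hHL (π vH) := by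
              refine congrArg some (Subtype.ext ?_)
              rw [ht vH]
              show c * (y : S) = v * t
              rw [hvx, mul_assoc, ← hyt]
            rw [e2] at h3
            exact h3
          · rw [e1, pfAct_neg hcy] at h3
            rcases σ.2 _ _ h3 with ⟨h4, _⟩ | ⟨x', y', h4, h5, h6⟩
            · exact absurd h4 (by simp)
            · exact absurd h5 (by simp)

theorem sCong_eSub
    (σ : ↥{σ : ActCong S (Option ↥(Lset u)) (pfAct (fun s y => s * y) (Lset u)) |
        ∀ a b, σ.1.r a b → HbarRel (Lset u) a b}) :
    sCong hHL hv (eSub hHL hv σ.1) = σ := by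
  refine Subtype.ext (Subtype.ext (Setoid.ext fun a b => ?_))
  exact sRel_eSub_iff hHL hv σ a b

/-- The order isomorphism between the interval and the subgroup lattice. -/
noncomputable def eIso :
    ↥{σ : ActCong S (Option ↥(Lset u)) (pfAct (fun s y => s * y) (Lset u)) |
        ∀ a b, σ.1.r a b → HbarRel (Lset u) a b} ≃o
      Subgroup ↥(GammaGrp v hv hHL) where
  toFun σ := eSub hHL hv σ.1
  invFun := sCong hHL hv
  left_inv := sCong_eSub hHL hv
  right_inv := eSub_sCong hHL hv
  map_rel_iff' := by
    intro σ τ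
    constructor
    · intro h
      show σ.1.1 ≤ τ.1.1
      intro a b hab
      have h1 : sRel hHL hv (eSub hHL hv σ.1) a b :=
        (sRel_eSub_iff hHL hv σ a b).mpr hab
      have h2 : sRel hHL hv (eSub hHL hv τ.1) a b := sRel_mono h h1
      exact (sRel_eSub_iff hHL hv τ a b).mp h2
    · intro h
      intro π hπ
      have hle : σ.1.1 ≤ τ.1.1 := h
      exact hle hπ

end SK

end Act

end SchutzAux


/-- Let `S` be a semigroup, `L = L_u` an `L`-class and `H = H_v ⊆ L` an `H`-class
contained in it.  Then the interval `[Δ, H_L̄]` of the congruence lattice of the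
principal factor left `S`-act on `L ∪ {0}` is isomorphic, as a lattice, to the
subgroup lattice of the (right) Schützenberger group
`Γ(H) = {ρ_t : h ↦ ht | t ∈ S¹, Ht ⊆ H} ≤ Sym(H)`; moreover the isomorphism is given
by restriction to `H`: a congruence `σ` in the interval relates two elements of `H`
exactly when the corresponding subgroup `e σ ≤ Γ(H)` contains a permutation carrying
one to the other (this is the correspondence between left congruences of the group
structure `(H, ⋆)` of `Γ(H)` and its subgroups). -/
theorem schutzenberger_interval_iso {S : Type*} [Semigroup S] (u v : S)
    (hv : lrel u v) (hHL : ∀ z : S, hrel v z → lrel u z) :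
    ∃ Γ : Subgroup (Equiv.Perm ↥{z | hrel v z}),
      ((Γ : Set (Equiv.Perm ↥{z | hrel v z})) =
        {π | π = Equiv.refl ↥{z | hrel v z} ∨
          ∃ t : S, ∀ h : ↥{z | hrel v z}, (↑(π h) : S) = (h : S) * t}) ∧
      ∃ e : ↥{σ : ActCong S (Option ↥{z | lrel u z})
                (pfAct (fun s y => s * y) {z | lrel u z}) |
              ∀ a b, σ.1.r a b → HbarRel {z | lrel u z} a b} ≃o Subgroup ↥Γ,
        ∀ σ (x y : ↥{z | hrel v z}),
          σ.1.1.r (some ⟨(x : S), hHL _ x.2⟩) (some ⟨(y : S), hHL _ y.2⟩) ↔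
            ∃ π : ↥Γ, π ∈ e σ ∧ (π : Equiv.Perm ↥{z | hrel v z}) x = y := by
  refine ⟨SchutzAux.GammaGrp v hv hHL, rfl, SchutzAux.eIso hHL hv, ?_⟩
  intro σ x y
  exact SchutzAux.moreover hHL hv σ.1 x y
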